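/- Let L be a regular language over an alphabet Σ whose set of left quotients {w⁻¹L | w ∈ Σ*} has cardinality n with n ≥ 2. Then the set of left quotients of D(L) has cardinality at most 2^n − n; that is, sc(D(L)) ≤ 2^n − n. -/

import Mathlib

variable {α : Type*}

/-- The left quotient of a language `L` by a word `w`: `w⁻¹L = {x | w ++ x ∈ L}`. -/
def leftQuot (w : List α) (L : Set (List α)) : Set (List α) := {x | w ++ x ∈ L}

/-- The distinguishability language `D(L)`. -/
def dist (L : Set (List α)) : Set (List α) := {w | ∃ x y : List α, x ++ w ∈ L ∧ y ++ w ∉ L}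

/-- The set of all suffixes of words of `L`. -/
def suffixes (L : Set (List α)) : Set (List α) := {v | ∃ u : List α, u ++ v ∈ L}

lemma leftQuot_leftQuot (w a : List α) (L : Set (List α)) :
    leftQuot w (leftQuot a L) = leftQuot (a ++ w) L := by
  ext x; simp [leftQuot, List.append_assoc]

lemma ncard_powerset {s : Set α} (hs : s.Finite) :
    {t | t ⊆ s}.ncard = 2 ^ s.ncard := by
  classical
  have h1 : {t | t ⊆ s} = ↑(Finset.image (fun t : Finset α => (t : Set α)) hs.toFinset.powerset) := by
    ext t
    simp only [Finset.coe_image, Set.mem_image, Finset.mem_coe, Finset.mem_powerset,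
      Set.mem_setOf_eq]
    constructor
    · intro ht
      refine ⟨(hs.subset ht).toFinset, ?_, by simp⟩
      intro x hx
      simp only [Set.Finite.mem_toFinset] at hx ⊢
      exact ht hx
    · rintro ⟨u, hu, rfl⟩
      intro x hx
      simp only [Finset.mem_coe] at hx
      have := hu hx
      simpa using this
  rw [h1, Set.ncard_coe_finset, Finset.card_image_of_injective _ (Finset.coe_injective),
    Finset.card_powerset, Set.ncard_eq_toFinset_card _ hs]

theorem stmt_11 (L : Set (List α)) (hL : Language.IsRegular L) (n : ℕ) (hn : 2 ≤ n)
    (hcard : {M : Set (List α) | ∃ w : List α, M = leftQuot w L}.ncard = n) :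
    {M : Set (List α) | ∃ w : List α, M = leftQuot w (dist L)}.Finite ∧
      {M : Set (List α) | ∃ w : List α, M = leftQuot w (dist L)}.ncard ≤ 2 ^ n - n := by
  classical
  set Q : Set (Set (List α)) := {M | ∃ w : List α, M = leftQuot w L} with hQ
  have hQfin : Q.Finite := by
    by_contra h
    rw [Set.Infinite.ncard h] at hcard
    omega
  have hLQ : L ∈ Q := ⟨[], by simp [leftQuot]⟩
  have key : ∀ w : List α, leftQuot w (dist L) =
      ⋃₀ ((fun M => leftQuot w M) '' Q) \ ⋂₀ ((fun M => leftQuot w M) '' Q) := by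
    intro w
    ext x
    constructor
    · rintro ⟨a, b, ha, hb⟩
      refine ⟨⟨leftQuot w (leftQuot a L), ⟨leftQuot a L, ⟨a, rfl⟩, rfl⟩, ?_⟩, ?_⟩
      · simpa [leftQuot, List.append_assoc] using ha
      · intro h
        have := h (leftQuot w (leftQuot b L)) ⟨leftQuot b L, ⟨b, rfl⟩, rfl⟩
        exact hb (by simpa [leftQuot, List.append_assoc] using this)
    · rintro ⟨⟨M, ⟨M', ⟨a, rfl⟩, rfl⟩, hx⟩, hni⟩
      rw [Set.mem_sInter] at hni
      push_neg at hni
      obtain ⟨M2, ⟨M2', ⟨b, rfl⟩, rfl⟩, hx2⟩ := hni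
      exact ⟨a, b, by simpa [leftQuot, List.append_assoc] using hx,
        by simpa [leftQuot, List.append_assoc] using hx2⟩
  set T : Set (Set (List α)) → Set (List α) := fun S => ⋃₀ S \ ⋂₀ S with hT
  set P2 : Set (Set (Set (List α))) := {S | S ⊆ Q ∧ 2 ≤ S.ncard} with hP2
  have hsub : {M : Set (List α) | ∃ w : List α, M = leftQuot w (dist L)} ⊆
      insert ∅ (T '' P2) := by
    rintro M ⟨w, rfl⟩
    rw [key w]
    set S := (fun M => leftQuot w M) '' Q with hS
    have hSQ : S ⊆ Q := by
      rintro _ ⟨M', ⟨a, rfl⟩, rfl⟩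
      exact ⟨a ++ w, (leftQuot_leftQuot w a L).symm ▸ rfl⟩
    have hSfin : S.Finite := hQfin.subset hSQ
    have hSne : S.Nonempty := ⟨_, L, hLQ, rfl⟩
    rcases le_or_gt 2 S.ncard with h2 | h2
    · exact Set.mem_insert_iff.mpr (Or.inr ⟨S, ⟨hSQ, h2⟩, rfl⟩)
    · have h1 : S.ncard = 1 := by
        have := (Set.ncard_pos hSfin).mpr hSne
        omega
      obtain ⟨a, ha⟩ := Set.ncard_eq_one.mp h1
      rw [ha]
      simp
  have hP2fin : P2.Finite := hQfin.finite_subsets.subset (fun S hS => hS.1)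
  have himg : (T '' P2).Finite := hP2fin.image T
  have hfin : {M : Set (List α) | ∃ w : List α, M = leftQuot w (dist L)}.Finite :=
    (himg.insert ∅).subset hsub
  refine ⟨hfin, ?_⟩
  have hnlt : n + 1 ≤ 2 ^ n := (Nat.lt_two_pow_self (n := n))
  set B : Set (Set (Set (List α))) :=
    insert ∅ ((fun a : Set (List α) => ({a} : Set (Set (List α)))) '' Q) with hBdef
  have hBsub : B ⊆ {S | S ⊆ Q} := by
    rintro S hS
    rcases hS with rfl | ⟨a, ha, rfl⟩
    · exact Set.empty_subset _
    · exact Set.singleton_subset_iff.mpr ha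
  have hP2sub : P2 ⊆ {S | S ⊆ Q} \ B := by
    rintro S ⟨hSQ, h2⟩
    refine ⟨hSQ, ?_⟩
    rintro (rfl | ⟨a, ha, rfl⟩)
    · simp at h2
    · rw [Set.ncard_singleton] at h2; omega
  have hBcard : B.ncard = n + 1 := by
    rw [hBdef, Set.ncard_insert_of_notMem (by simp) (hQfin.image _),
      Set.ncard_image_of_injective _ (fun a b h => by
        simpa using Set.singleton_eq_singleton_iff.mp h), hcard]
  have hAcard : {S | S ⊆ Q}.ncard = 2 ^ n := by
    rw [ncard_powerset hQfin, hcard]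
  have hdiff : ({S | S ⊆ Q} \ B).ncard = 2 ^ n - (n + 1) := by
    rw [Set.ncard_diff hBsub (hQfin.finite_subsets.subset hBsub), hAcard, hBcard]
  have hP2card : P2.ncard ≤ 2 ^ n - (n + 1) :=
    hdiff ▸ Set.ncard_le_ncard hP2sub (hQfin.finite_subsets.diff (t := B))
  have h1 := Set.ncard_le_ncard hsub (himg.insert ∅)
  have h2 := Set.ncard_insert_le (∅ : Set (List α)) (T '' P2)
  have h3 := Set.ncard_image_le hP2fin (f := T)
  omega
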